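/- arXiv:2204.02343 — 2 statements merged into one kernel-verified Lean document; each statement's English description precedes it below -/
import Mathlib

section
/- Assume μ, σ : ℝ → ℝ satisfy conditions (A1)–(A4) with parameters p₀, p₁ ∈ [2,∞), ℓ_μ ∈ (0,∞), ℓ_σ ∈ [0, ℓ_μ/2], and let μ̃, σ̃ : ℝ → ℝ be the transformed coefficients defined via the function G. Then σ̃ satisfies condition (A3): there exists c ∈ (0,∞) such that for all x, y ∈ ℝ, |σ̃(x) − σ̃(y)| ≤ c·(1 + |x|^{ℓ_σ} + |y|^{ℓ_σ})·|x − y|. -/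
/-- For `ξ₁ < … < ξ_k` and `i ∈ {0,…,k}`, `piece k ξ i` is the open interval
`(ξ_i, ξ_{i+1})` of the partition of `ℝ`, with the conventions `ξ₀ = -∞`, `ξ_{k+1} = ∞`. -/
def piece (k : ℕ) (ξ : Fin k → ℝ) (i : Fin (k + 1)) : Set ℝ :=
  {x : ℝ | (∀ j : Fin k, (j : ℕ) < (i : ℕ) → ξ j < x) ∧
    ∀ j : Fin k, (i : ℕ) ≤ (j : ℕ) → x < ξ j}

/-- The bump function `φ(x) = (1 - x²)⁴ · 1_{[-1,1]}(x)`. -/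
noncomputable def phi (x : ℝ) : ℝ := if x ∈ Set.Icc (-1 : ℝ) 1 then (1 - x ^ 2) ^ 4 else 0

/-- The transformation `G(x) = x + Σ_{i=1}^k α_i (x - ξ_i)|x - ξ_i| φ((x - ξ_i)/ν)`. -/
noncomputable def Gfun (k : ℕ) (ξ α : Fin k → ℝ) (ν : ℝ) (x : ℝ) : ℝ :=
  x + ∑ i : Fin k, α i * (x - ξ i) * |x - ξ i| * phi ((x - ξ i) / ν)

/-- Derivative of `t ↦ t|t| φ(t/ν)`. -/
noncomputable def Dfun (ν t : ℝ) : ℝ :=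
  if t ^ 2 ≤ ν ^ 2 then |t| * (1 - t ^ 2 / ν ^ 2) ^ 3 * (2 - 10 * (t ^ 2 / ν ^ 2)) else 0
lemma phi_nonneg (s : ℝ) : 0 ≤ phi s := by
  unfold phi; split_ifs with h
  · positivity
  · exact le_refl 0
lemma phi_le_one (s : ℝ) : phi s ≤ 1 := by
  unfold phi; split_ifs with h
  · obtain ⟨h1, h2⟩ := h
    have hs : s ^ 2 ≤ 1 := by nlinarith
    have : 0 ≤ 1 - s ^ 2 := by linarith
    have : (1 - s ^ 2) ^ 4 ≤ 1 ^ 4 := pow_le_pow_left₀ this (by nlinarith [sq_nonneg s]) 4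
    simpa using this
  · norm_num

lemma phi_even (s : ℝ) : phi (-s) = phi s := by
  unfold phi
  have : (-s ∈ Set.Icc (-1:ℝ) 1) ↔ (s ∈ Set.Icc (-1:ℝ) 1) := by
    simp [Set.mem_Icc]; constructor <;> intro h <;> constructor <;> linarith [h.1, h.2]
  rw [if_congr this rfl rfl]
  ring_nf

lemma phi_ne_zero {s : ℝ} (h : phi s ≠ 0) : |s| < 1 := by
  unfold phi at h
  split_ifs at h with hmem
  · obtain ⟨h1, h2⟩ := hmem
    rcases eq_or_lt_of_le (abs_le.2 ⟨h1, h2⟩) with he | hl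
    · exfalso
      have : s ^ 2 = 1 := by rw [← sq_abs, he]; norm_num
      apply h; rw [this]; norm_num
    · exact hl
  · exact absurd rfl h

lemma Dfun_even (ν t : ℝ) : Dfun ν (-t) = Dfun ν t := by
  unfold Dfun; rw [neg_pow, abs_neg]; norm_num

lemma Dfun_zero_of {ν t : ℝ} (hν : 0 < ν) (h : ν ≤ |t|) : Dfun ν t = 0 := by
  unfold Dfun
  split_ifs with hc
  · have h1 : ν ^ 2 ≤ t ^ 2 := by
      rw [← sq_abs t]; exact pow_le_pow_left₀ hν.le h 2
    have h2 : t ^ 2 = ν ^ 2 := le_antisymm hc h1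
    rw [h2, div_self (by positivity)]
    norm_num
  · rfl

lemma Dfun_ne_zero {ν t : ℝ} (hν : 0 < ν) (h : Dfun ν t ≠ 0) : |t| < ν := by
  by_contra hc
  exact h (Dfun_zero_of hν (not_lt.1 hc))

lemma Dfun_abs_le {ν : ℝ} (hν : 0 < ν) (t : ℝ) : |Dfun ν t| ≤ 4 * ν := by
  unfold Dfun
  split_ifs with hc
  · set q : ℝ := t ^ 2 / ν ^ 2 with hq
    have hq0 : 0 ≤ q := by positivity
    have hq1 : q ≤ 1 := by
      rw [hq, div_le_one (by positivity)]; exact hc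
    have htν : |t| ≤ ν := by nlinarith [sq_abs t, abs_nonneg t]
    have h1q0 : 0 ≤ 1 - q := by linarith
    have hb3 : (1 - q) ^ 3 ≤ 1 - q := by nlinarith [sq_nonneg (1 - q)]
    have hb30 : 0 ≤ (1 - q) ^ 3 := by positivity
    rw [abs_mul, abs_mul, abs_abs, abs_of_nonneg hb30]
    rcases le_or_gt (10 * q) 2 with hcase | hcase
    · have habs : |2 - 10 * q| = 2 - 10 * q := abs_of_nonneg (by linarith)
      rw [habs]
      calc |t| * (1 - q) ^ 3 * (2 - 10 * q) ≤ ν * 1 * 2 := by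
            apply mul_le_mul (mul_le_mul htν (by nlinarith) hb30 hν.le) (by linarith)
              (by linarith) (by positivity)
        _ ≤ 4 * ν := by linarith
    · have habs : |2 - 10 * q| = 10 * q - 2 := by
        rw [abs_of_nonpos (by linarith)]; ring
      rw [habs]
      calc |t| * (1 - q) ^ 3 * (10 * q - 2) ≤ ν * (1 - q) * (10 * q - 2) := by
            apply mul_le_mul_of_nonneg_right (mul_le_mul htν hb3 hb30 hν.le) (by linarith)
        _ ≤ 4 * ν := by nlinarith [sq_nonneg (q - 3/5)]
  · have : |(0:ℝ)| ≤ 4 * ν := by rw [abs_zero]; positivity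
    exact this

lemma pow_lip {ν s t : ℝ} (hs0 : 0 ≤ s) (hsν : s ≤ ν) (ht0 : 0 ≤ t) (htν : t ≤ ν) (n : ℕ) :
    |s ^ n - t ^ n| ≤ n * ν ^ (n - 1) * |s - t| := by
  have hν0 : 0 ≤ ν := le_trans hs0 hsν
  rw [← geom_sum₂_mul s t n, abs_mul]
  apply mul_le_mul_of_nonneg_right _ (abs_nonneg _)
  calc |∑ i ∈ Finset.range n, s ^ i * t ^ (n - 1 - i)|
      ≤ ∑ i ∈ Finset.range n, |s ^ i * t ^ (n - 1 - i)| := Finset.abs_sum_le_sum_abs _ _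
    _ ≤ n * ν ^ (n - 1) := by
        have hb : ∀ i ∈ Finset.range n, |s ^ i * t ^ (n - 1 - i)| ≤ ν ^ (n - 1) := by
          intro i hi
          rw [Finset.mem_range] at hi
          rw [abs_of_nonneg (by positivity)]
          calc s ^ i * t ^ (n - 1 - i) ≤ ν ^ i * ν ^ (n - 1 - i) :=
                mul_le_mul (pow_le_pow_left₀ hs0 hsν i) (pow_le_pow_left₀ ht0 htν _)
                  (by positivity) (by positivity)
            _ = ν ^ (n - 1) := by rw [← pow_add]; congr 1; omega
        have := Finset.sum_le_card_nsmul (Finset.range n) _ _ hb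
        simpa [Finset.card_range, nsmul_eq_mul] using this

lemma Dfun_poly {ν t : ℝ} (hν : 0 < ν) (ht0 : 0 ≤ t) (htν : t ≤ ν) :
    Dfun ν t = 2*t - 16*t^3/ν^2 + 36*t^5/ν^4 - 32*t^7/ν^6 + 10*t^9/ν^8 := by
  unfold Dfun
  rw [if_pos (by nlinarith), abs_of_nonneg ht0]
  field_simp
  ring

lemma Dfun_lip_aux {ν s t : ℝ} (hν : 0 < ν) (hs0 : 0 ≤ s) (hsν : s ≤ ν)
    (ht0 : 0 ≤ t) (htν : t ≤ ν) : |Dfun ν s - Dfun ν t| ≤ 600 * |s - t| := by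
  have h3 := pow_lip hs0 hsν ht0 htν 3
  have h5 := pow_lip hs0 hsν ht0 htν 5
  have h7 := pow_lip hs0 hsν ht0 htν 7
  have h9 := pow_lip hs0 hsν ht0 htν 9
  norm_num at h3 h5 h7 h9
  have hν8 : (0:ℝ) < ν ^ 8 := by positivity
  rw [← mul_le_mul_iff_right₀ hν8]
  have e : ν ^ 8 * (Dfun ν s - Dfun ν t) =
      2*ν^8*(s-t) + (-16)*ν^6*(s^3-t^3) + 36*ν^4*(s^5-t^5)
        + (-32)*ν^2*(s^7-t^7) + 10*(s^9-t^9) := by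
    rw [Dfun_poly hν hs0 hsν, Dfun_poly hν ht0 htν]; field_simp; ring
  have tri : ∀ a b c d e : ℝ, |a+b+c+d+e| ≤ |a|+|b|+|c|+|d|+|e| := by
    intro a b c d e
    calc |a+b+c+d+e| ≤ |a+b+c+d| + |e| := abs_add_le _ _
      _ ≤ (|a+b+c| + |d|) + |e| := by linarith [abs_add_le (a+b+c) d]
      _ ≤ ((|a+b| + |c|) + |d|) + |e| := by linarith [abs_add_le (a+b) c]
      _ ≤ |a|+|b|+|c|+|d|+|e| := by linarith [abs_add_le a b]
  calc ν ^ 8 * |Dfun ν s - Dfun ν t| = |ν ^ 8 * (Dfun ν s - Dfun ν t)| := by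
        rw [abs_mul, abs_of_pos hν8]
    _ ≤ |2*ν^8*(s-t)| + |(-16)*ν^6*(s^3-t^3)| + |36*ν^4*(s^5-t^5)|
          + |(-32)*ν^2*(s^7-t^7)| + |10*(s^9-t^9)| := by rw [e]; exact tri _ _ _ _ _
    _ ≤ 2*ν^8*|s-t| + 16*ν^6*(3*ν^2*|s-t|) + 36*ν^4*(5*ν^4*|s-t|)
          + 32*ν^2*(7*ν^6*|s-t|) + 10*(9*ν^8*|s-t|) := by
        have a1 : |2*ν^8*(s-t)| = 2*ν^8*|s-t| := by
          rw [abs_mul, abs_of_nonneg (by positivity : (0:ℝ) ≤ 2*ν^8)]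
        have a2 : |(-16)*ν^6*(s^3-t^3)| ≤ 16*ν^6*(3*ν^2*|s-t|) := by
          rw [abs_mul]
          have : |(-16)*ν^6| = 16*ν^6 := by rw [abs_mul]; simp [abs_of_pos hν]
          rw [this]; exact mul_le_mul_of_nonneg_left h3 (by positivity)
        have a3 : |36*ν^4*(s^5-t^5)| ≤ 36*ν^4*(5*ν^4*|s-t|) := by
          rw [abs_mul]
          have : |36*ν^4| = 36*ν^4 := abs_of_nonneg (by positivity)
          rw [this]; exact mul_le_mul_of_nonneg_left h5 (by positivity)
        have a4 : |(-32)*ν^2*(s^7-t^7)| ≤ 32*ν^2*(7*ν^6*|s-t|) := by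
          rw [abs_mul]
          have : |(-32)*ν^2| = 32*ν^2 := by rw [abs_mul]; simp [abs_of_pos hν]
          rw [this]; exact mul_le_mul_of_nonneg_left h7 (by positivity)
        have a5 : |10*(s^9-t^9)| ≤ 10*(9*ν^8*|s-t|) := by
          rw [abs_mul]
          have : |(10:ℝ)| = 10 := by norm_num
          rw [this]; exact mul_le_mul_of_nonneg_left h9 (by norm_num)
        linarith
    _ ≤ ν ^ 8 * (600 * |s-t|) := by nlinarith [abs_nonneg (s-t), pow_pos hν 8]

lemma Dfun_lip_nn' {ν : ℝ} (hν : 0 < ν) {s t : ℝ} (hs0 : 0 ≤ s) (hst : s ≤ t) :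
    |Dfun ν s - Dfun ν t| ≤ 600 * |s - t| := by
  have ht0 : 0 ≤ t := le_trans hs0 hst
  rcases le_or_gt t ν with htν | htν
  · exact Dfun_lip_aux hν hs0 (le_trans hst htν) ht0 htν
  · rcases le_or_gt s ν with hsν | hsν
    · have hDt : Dfun ν t = 0 := Dfun_zero_of hν (by rw [abs_of_nonneg ht0]; exact htν.le)
      have hDν : Dfun ν ν = 0 := Dfun_zero_of hν (by rw [abs_of_pos hν])
      have h := Dfun_lip_aux hν hs0 hsν hν.le (le_refl ν)
      rw [hDν] at h; rw [hDt]
      apply h.trans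
      have h1 : |s - ν| ≤ |s - t| := by
        rw [abs_of_nonpos (by linarith), abs_of_nonpos (by linarith)]; linarith
      linarith
    · have hDt : Dfun ν t = 0 := Dfun_zero_of hν (by rw [abs_of_nonneg ht0]; exact htν.le)
      have hDs : Dfun ν s = 0 := Dfun_zero_of hν (by rw [abs_of_nonneg hs0]; exact hsν.le)
      rw [hDs, hDt]; simp

lemma Dfun_lip_nn {ν : ℝ} (hν : 0 < ν) {s t : ℝ} (hs0 : 0 ≤ s) (ht0 : 0 ≤ t) :
    |Dfun ν s - Dfun ν t| ≤ 600 * |s - t| := by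
  rcases le_total s t with h | h
  · exact Dfun_lip_nn' hν hs0 h
  · rw [abs_sub_comm, abs_sub_comm s t]; exact Dfun_lip_nn' hν ht0 h

lemma Dfun_lip {ν : ℝ} (hν : 0 < ν) (s t : ℝ) : |Dfun ν s - Dfun ν t| ≤ 600 * |s - t| := by
  rcases le_or_gt 0 s with hs | hs <;> rcases le_or_gt 0 t with ht | ht
  · exact Dfun_lip_nn hν hs ht
  · rw [← Dfun_even ν t]
    have h := Dfun_lip_nn hν hs (by linarith : (0:ℝ) ≤ -t)
    apply h.trans
    have : |s - -t| ≤ |s - t| := by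
      rw [abs_of_nonneg (by linarith : (0:ℝ) ≤ s - t)]
      rw [abs_le]; constructor <;> linarith
    linarith
  · rw [← Dfun_even ν s]
    have h := Dfun_lip_nn hν (by linarith : (0:ℝ) ≤ -s) ht
    apply h.trans
    have : |-s - t| ≤ |s - t| := by
      rw [abs_of_nonpos (by linarith : s - t ≤ 0)]
      rw [abs_le]; constructor <;> linarith
    linarith
  · rw [← Dfun_even ν s, ← Dfun_even ν t]
    have h := Dfun_lip_nn hν (by linarith : (0:ℝ) ≤ -s) (by linarith : (0:ℝ) ≤ -t)
    apply h.trans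
    rw [show -s - -t = -(s - t) by ring, abs_neg]

lemma hasDerivAt_of_quad {f : ℝ → ℝ} {a C : ℝ}
    (h : ∀ᶠ x in nhds a, |f x - f a| ≤ C * (x - a) ^ 2) : HasDerivAt f 0 a := by
  rw [hasDerivAt_iff_isLittleO, Asymptotics.isLittleO_iff]
  intro c hc
  have hB : (0:ℝ) < |C| + 1 := by positivity
  have h2 : ∀ᶠ x in nhds a, |x - a| ≤ c / (|C| + 1) := by
    rw [Metric.eventually_nhds_iff]
    exact ⟨c / (|C| + 1), by positivity, fun {x} hx => by
      rw [Real.dist_eq] at hx; exact hx.le⟩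
  filter_upwards [h, h2] with x h1 h2
  simp only [smul_zero, sub_zero, Real.norm_eq_abs]
  have e1 : C * (x - a) ^ 2 ≤ (|C| + 1) * |x - a| ^ 2 := by
    rw [sq_abs]; nlinarith [le_abs_self C, sq_nonneg (x - a)]
  have e2 : |x - a| * (|C| + 1) ≤ c := (le_div_iff₀ hB).mp h2
  nlinarith [abs_nonneg (x - a)]

lemma m_eq_zero {ν x : ℝ} (hν : 0 < ν) (hx : ν < x) : x * |x| * phi (x / ν) = 0 := by
  have : phi (x / ν) = 0 := by
    unfold phi
    rw [if_neg]
    intro hmem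
    rw [Set.mem_Icc] at hmem
    have := hmem.2
    rw [div_le_one hν] at this
    linarith
  rw [this, mul_zero]

lemma hasDerivAt_m_nonneg {ν : ℝ} (hν : 0 < ν) {t : ℝ} (ht : 0 ≤ t) :
    HasDerivAt (fun s : ℝ => s * |s| * phi (s / ν)) (Dfun ν t) t := by
  rcases eq_or_lt_of_le ht with h0 | h0
  · -- t = 0
    rw [← h0]
    have hD : Dfun ν 0 = 0 := by unfold Dfun; simp
    rw [hD]
    apply hasDerivAt_of_quad (C := 1)
    apply Filter.Eventually.of_forall
    intro x
    simp only [zero_mul, abs_zero, mul_zero, sub_zero, zero_div]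
    rw [abs_mul, abs_mul, abs_abs, abs_of_nonneg (phi_nonneg _)]
    nlinarith [phi_le_one (x/ν), phi_nonneg (x/ν), sq_abs x, abs_nonneg x]
  rcases lt_trichotomy t ν with h1 | h1 | h1
  · -- 0 < t < ν
    have h1' : HasDerivAt (fun x : ℝ => x / ν) (1/ν) t := (hasDerivAt_id t).div_const ν
    have h2 := h1'.pow 2
    have h3 := h2.const_sub 1
    have h4 := h3.pow 4
    have h5 := (hasDerivAt_pow 2 t).mul h4
    have heq : (fun s : ℝ => s * |s| * phi (s / ν)) =ᶠ[nhds t]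
        (fun x : ℝ => x ^ 2 * (1 - (x / ν) ^ 2) ^ 4) := by
      filter_upwards [Ioo_mem_nhds h0 h1] with x hx
      have hx1 : x / ν ∈ Set.Icc (-1:ℝ) 1 := by
        rw [Set.mem_Icc]
        constructor
        · have : (0:ℝ) ≤ x / ν := div_nonneg hx.1.le hν.le
          linarith
        · rw [div_le_one hν]; exact hx.2.le
      unfold phi
      rw [if_pos hx1, abs_of_pos hx.1]
      ring
    have hD : Dfun ν t = ↑2 * t ^ (2-1) * (1 - (t / ν) ^ 2) ^ 4
        + t ^ 2 * (↑4 * (1 - (t / ν) ^ 2) ^ (4-1) * -(↑2 * (t / ν) ^ (2-1) * (1 / ν))) := by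
      unfold Dfun
      rw [if_pos (by nlinarith), abs_of_nonneg ht]
      push_cast
      field_simp
      ring
    rw [hD]
    exact h5.congr_of_eventuallyEq heq
  · -- t = ν
    rw [h1]
    have hmν : ν * |ν| * phi (ν / ν) = 0 := by
      rw [div_self hν.ne', show phi 1 = 0 by unfold phi; rw [if_pos (by norm_num)]; norm_num]
      ring
    have hD : Dfun ν ν = 0 := Dfun_zero_of hν (by rw [abs_of_pos hν])
    rw [hD]
    apply hasDerivAt_of_quad (C := 4)
    filter_upwards [Ioi_mem_nhds hν] with x hx
    rw [hmν, sub_zero]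
    rcases le_or_gt x ν with hxν | hxν
    · have hx0 : (0:ℝ) < x := hx
      have hx1 : x / ν ∈ Set.Icc (-1:ℝ) 1 := by
        rw [Set.mem_Icc]
        constructor
        · have : (0:ℝ) ≤ x / ν := by positivity
          linarith
        · rw [div_le_one hν]; exact hxν
      have hm : x * |x| * phi (x / ν) = x ^ 2 * (1 - (x/ν)^2) ^ 4 := by
        unfold phi; rw [if_pos hx1, abs_of_pos hx0]; ring
      rw [hm]
      have hq0 : 0 ≤ 1 - (x/ν)^2 := by
        have : (x/ν)^2 ≤ 1 := by
          rw [div_pow, div_le_one (by positivity)]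
          exact pow_le_pow_left₀ hx0.le hxν 2
        linarith
      have hq1 : (1 - (x/ν)^2) ≤ 1 := by nlinarith [sq_nonneg (x/ν)]
      have e1 : x ^ 2 * (1 - (x/ν)^2) ^ 4 ≤ ν ^ 2 * (1 - (x/ν)^2) ^ 2 := by
        apply mul_le_mul
        · exact pow_le_pow_left₀ hx0.le hxν 2
        · have hb2 : (1 - (x/ν)^2)^2 ≤ 1 := by nlinarith
          nlinarith [sq_nonneg (1 - (x/ν)^2), hb2]
        · positivity
        · positivity
      have e2 : ν ^ 2 * (1 - (x/ν)^2) ^ 2 = (ν^2 - x^2)^2 / ν^2 := by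
        field_simp
      have e3 : (ν^2 - x^2)^2 ≤ 4*ν^2*(x - ν)^2 := by
        have : (ν^2 - x^2)^2 = (ν - x)^2 * (ν + x)^2 := by ring
        rw [this]
        have h4 : (ν + x)^2 ≤ 4 * ν^2 := by nlinarith
        nlinarith [sq_nonneg (ν - x)]
      have habs : |x ^ 2 * (1 - (x/ν)^2) ^ 4| = x ^ 2 * (1 - (x/ν)^2) ^ 4 :=
        abs_of_nonneg (by positivity)
      rw [habs]
      have e4 : (ν^2 - x^2)^2 / ν^2 ≤ 4 * (x - ν)^2 := by
        rw [div_le_iff₀ (by positivity)]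
        nlinarith
      linarith
    · rw [m_eq_zero hν hxν]
      simp
      positivity
  · -- ν < t
    have hD : Dfun ν t = 0 := Dfun_zero_of hν (by rw [abs_of_nonneg ht]; linarith)
    rw [hD]
    have heq : (fun s : ℝ => s * |s| * phi (s / ν)) =ᶠ[nhds t] (fun _ => (0:ℝ)) := by
      filter_upwards [Ioi_mem_nhds h1] with x hx
      exact m_eq_zero hν hx
    exact (hasDerivAt_const t 0).congr_of_eventuallyEq heq

lemma hasDerivAt_m {ν : ℝ} (hν : 0 < ν) (t : ℝ) :
    HasDerivAt (fun s : ℝ => s * |s| * phi (s / ν)) (Dfun ν t) t := by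
  rcases le_or_gt 0 t with ht | ht
  · exact hasDerivAt_m_nonneg hν ht
  · have h := hasDerivAt_m_nonneg hν (t := -t) (by linarith)
    have h2 := (h.comp t (hasDerivAt_neg t)).neg
    have heq : (fun s : ℝ => s * |s| * phi (s / ν))
        = (fun s : ℝ => -(((fun s : ℝ => s * |s| * phi (s / ν)) ∘ Neg.neg) s)) := by
      funext s
      simp only [Function.comp_apply]
      rw [abs_neg, neg_div, phi_even]
      ring
    rw [heq]
    rw [show Dfun ν t = -(Dfun ν (-t) * -1) by rw [Dfun_even]; ring]
    exact h2

lemma hasDerivAt_Gfun (k : ℕ) (ξ α : Fin k → ℝ) {ν : ℝ} (hν : 0 < ν) (x : ℝ) :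
    HasDerivAt (Gfun k ξ α ν) (1 + ∑ i : Fin k, α i * Dfun ν (x - ξ i)) x := by
  have hterm : ∀ i : Fin k, HasDerivAt
      (fun x : ℝ => α i * (x - ξ i) * |x - ξ i| * phi ((x - ξ i) / ν))
      (α i * Dfun ν (x - ξ i)) x := by
    intro i
    have hsub : HasDerivAt (fun x : ℝ => x - ξ i) 1 x := (hasDerivAt_id x).sub_const (ξ i)
    have h := ((hasDerivAt_m hν (x - ξ i)).comp x hsub).const_mul (α i)
    have heq : (fun x : ℝ => α i * (x - ξ i) * |x - ξ i| * phi ((x - ξ i) / ν))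
        = fun x : ℝ => α i * (((fun s : ℝ => s * |s| * phi (s / ν)) ∘ (fun y : ℝ => y - ξ i)) x) := by
      funext y; simp only [Function.comp_apply]; ring
    rw [heq]
    rw [show α i * Dfun ν (x - ξ i) = α i * (Dfun ν (x - ξ i) * 1) by ring]
    exact h
  have hsum := HasDerivAt.fun_sum (fun i (_ : i ∈ Finset.univ) => hterm i)
  have hall := (hasDerivAt_id x).add hsum
  exact hall

lemma sum_single_bound {k : ℕ} (f : Fin k → ℝ) (B : ℝ) (hB : 0 ≤ B)
    (hone : ∀ i j, f i ≠ 0 → f j ≠ 0 → i = j) (hb : ∀ i, |f i| ≤ B) :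
    |∑ i, f i| ≤ B := by
  by_cases hz : ∀ i, f i = 0
  · rw [Finset.sum_eq_zero (fun i _ => hz i), abs_zero]; exact hB
  · push_neg at hz
    obtain ⟨i0, hi0⟩ := hz
    rw [Finset.sum_eq_single_of_mem i0 (Finset.mem_univ _) (fun j _ hj => by
      by_contra h
      exact hj (hone j i0 h hi0))]
    exact hb i0

lemma sep_lemma {k : ℕ} {ξ : Fin k → ℝ} (hξ : StrictMono ξ) {ν : ℝ}
    (hν2 : ∀ i j : Fin k, (i : ℕ) + 1 = (j : ℕ) → ν < (ξ j - ξ i) / 2)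
    {x : ℝ} {i j : Fin k} (hi : |x - ξ i| < ν) (hj : |x - ξ j| < ν) : i = j := by
  by_contra hne
  have key : ∀ a b : Fin k, a < b → |x - ξ a| < ν → |x - ξ b| < ν → False := by
    intro a b hab ha hb
    have hab' : (a : ℕ) < (b : ℕ) := hab
    have hlt : (a : ℕ) + 1 < k := lt_of_le_of_lt hab' b.isLt
    set a' : Fin k := ⟨(a : ℕ) + 1, hlt⟩ with ha'
    have h1 := hν2 a a' rfl
    have h2 : ξ a' ≤ ξ b := hξ.monotone (by rw [Fin.le_def]; simp [ha']; omega)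
    rw [abs_lt] at ha hb
    linarith [ha.1, ha.2, hb.1, hb.2]
  rcases lt_or_gt_of_ne hne with h | h
  · exact key i j h hi hj
  · exact key j i h hj hi

lemma phi_zero_of {s : ℝ} (h : 1 < |s|) : phi s = 0 := by
  unfold phi
  rw [if_neg]
  intro hmem
  rw [Set.mem_Icc] at hmem
  have := abs_le.2 ⟨hmem.1, hmem.2⟩
  linarith

lemma rpow_add_le {p : ℝ} (hp : 0 ≤ p) {a b : ℝ} (ha : 0 ≤ a) (hb : 0 ≤ b) :
    (a + b) ^ p ≤ 2 ^ p * (a ^ p + b ^ p) := by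
  have h1 : a + b ≤ 2 * max a b := by
    rcases max_cases a b with ⟨h, h'⟩ | ⟨h, h'⟩ <;> rw [h] <;> linarith
  have hm : 0 ≤ max a b := le_max_of_le_left ha
  calc (a + b) ^ p ≤ (2 * max a b) ^ p :=
        Real.rpow_le_rpow (by linarith) h1 hp
    _ = 2 ^ p * (max a b) ^ p := Real.mul_rpow (by norm_num) hm
    _ ≤ 2 ^ p * (a ^ p + b ^ p) := by
        apply mul_le_mul_of_nonneg_left _ (Real.rpow_nonneg (by norm_num) p)
        rcases max_cases a b with ⟨h, h'⟩ | ⟨h, h'⟩ <;> rw [h]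
        · linarith [Real.rpow_nonneg hb p]
        · linarith [Real.rpow_nonneg ha p]


set_option maxHeartbeats 1600000 in
/-- Under (A1)-(A4), the transformed diffusion `σ̃` satisfies condition (A3). -/
theorem stmt_10 (p₀ p₁ ℓμ ℓσ : ℝ) (hp₀ : 2 ≤ p₀) (hp₁ : 2 ≤ p₁)
    (hℓμ : 0 < ℓμ) (hℓσ0 : 0 ≤ ℓσ) (hℓσ : ℓσ ≤ ℓμ / 2)
    (μ σ : ℝ → ℝ)
    -- (A1)
    (c₁ : ℝ) (hc₁ : 0 < c₁)
    (hA1 : ∀ x : ℝ, 2 * x * μ x + (p₀ - 1) * (σ x) ^ 2 ≤ c₁ * (1 + x ^ 2))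
    -- (A2): discontinuity points ξ₁ < … < ξ_k, k ≥ 1
    (c₂ : ℝ) (hc₂ : 0 < c₂) (k : ℕ) (hk : 1 ≤ k) (ξ : Fin k → ℝ) (hξ : StrictMono ξ)
    (hA2i : ∀ i : Fin (k + 1), ∀ x ∈ piece k ξ i, ∀ y ∈ piece k ξ i,
      2 * (x - y) * (μ x - μ y) + (p₁ - 1) * (σ x - σ y) ^ 2 ≤ c₂ * |x - y| ^ 2)
    (hA2ii : ∀ i : Fin (k + 1), ∀ x ∈ piece k ξ i, ∀ y ∈ piece k ξ i,
      |μ x - μ y| ≤ c₂ * (1 + |x| ^ ℓμ + |y| ^ ℓμ) * |x - y|)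
    -- (A3)
    (c₃ : ℝ) (hc₃ : 0 < c₃)
    (hA3 : ∀ x y : ℝ, |σ x - σ y| ≤ c₃ * (1 + |x| ^ ℓσ + |y| ^ ℓσ) * |x - y|)
    -- (A4)
    (hA4 : ∀ i : Fin k, σ (ξ i) ≠ 0)
    -- one-sided limits μ(ξ_i-) and μ(ξ_i+)
    (μm μp : Fin k → ℝ)
    (hμm : ∀ i : Fin k, Filter.Tendsto μ (nhdsWithin (ξ i) (Set.Iio (ξ i))) (nhds (μm i)))
    (hμp : ∀ i : Fin k, Filter.Tendsto μ (nhdsWithin (ξ i) (Set.Ioi (ξ i))) (nhds (μp i)))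
    -- α_i = (μ(ξ_i-) - μ(ξ_i+)) / (2 σ(ξ_i)²)
    (α : Fin k → ℝ) (hα : ∀ i : Fin k, α i = (μm i - μp i) / (2 * (σ (ξ i)) ^ 2))
    -- ν ∈ (0, ρ_{ξ,α}):  ν·8|α_i| < 1 encodes ν < 1/(8|α_i|) with the convention 1/0 = ∞
    (ν : ℝ) (hν0 : 0 < ν)
    (hν1 : ∀ i : Fin k, ν * (8 * |α i|) < 1)
    (hν2 : ∀ i j : Fin k, (i : ℕ) + 1 = (j : ℕ) → ν < (ξ j - ξ i) / 2)
    -- G is differentiable with derivative G'; G' is differentiable off the points ξ_i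
    -- with derivative G'', extended to the points ξ_i by the prescribed formula
    (G' G'' Ginv : ℝ → ℝ)
    (hG' : ∀ x : ℝ, HasDerivAt (Gfun k ξ α ν) (G' x) x)
    (hG''a : ∀ x : ℝ, (∀ i : Fin k, x ≠ ξ i) → HasDerivAt G' (G'' x) x)
    (hG''b : ∀ i : Fin k, G'' (ξ i) = 2 * α i + 2 * (μp i - μ (ξ i)) / (σ (ξ i)) ^ 2)
    -- Ginv is the inverse of the bijection G
    (hGinv1 : ∀ x : ℝ, Ginv (Gfun k ξ α ν x) = x)
    (hGinv2 : ∀ x : ℝ, Gfun k ξ α ν (Ginv x) = x) :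
    -- μ̃ = (G'·μ + ½·G''·σ²) ∘ G⁻¹  and  σ̃ = (G'·σ) ∘ G⁻¹
    ∃ c : ℝ, 0 < c ∧ ∀ x y : ℝ,
      |(G' (Ginv x) * σ (Ginv x)) - (G' (Ginv y) * σ (Ginv y))|
        ≤ c * (1 + |x| ^ ℓσ + |y| ^ ℓσ) * |x - y| := by
  classical
  have hG'eq : ∀ x : ℝ, G' x = 1 + ∑ i : Fin k, α i * Dfun ν (x - ξ i) :=
    fun x => (hG' x).unique (hasDerivAt_Gfun k ξ α hν0 x)
  have hG'near : ∀ x : ℝ, |G' x - 1| ≤ 1/2 := by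
    intro x
    rw [hG'eq x, add_sub_cancel_left]
    apply sum_single_bound _ _ (by norm_num)
    · intro i j hi hj
      exact sep_lemma hξ hν2 (Dfun_ne_zero hν0 (right_ne_zero_of_mul hi))
        (Dfun_ne_zero hν0 (right_ne_zero_of_mul hj))
    · intro i
      rw [abs_mul]
      calc |α i| * |Dfun ν (x - ξ i)| ≤ |α i| * (4 * ν) :=
            mul_le_mul_of_nonneg_left (Dfun_abs_le hν0 _) (abs_nonneg _)
        _ ≤ 1/2 := by nlinarith [hν1 i, abs_nonneg (α i)]
  have hG'lo : ∀ x : ℝ, 1/2 ≤ G' x := by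
    intro x; have := abs_le.1 (hG'near x); linarith [this.1]
  have hG'hi : ∀ x : ℝ, |G' x| ≤ 3/2 := by
    intro x; have := abs_le.1 (hG'near x)
    rw [abs_le]; constructor <;> linarith [this.1, this.2]
  obtain ⟨LG, hLGdef⟩ : ∃ LG : ℝ, LG = 600 * ∑ i : Fin k, |α i| := ⟨_, rfl⟩
  have hLG0 : 0 ≤ LG := by rw [hLGdef]; positivity
  have hG'lip : ∀ a b : ℝ, |G' a - G' b| ≤ LG * |a - b| := by
    intro a b
    rw [hG'eq a, hG'eq b]
    have e : (1 + ∑ i : Fin k, α i * Dfun ν (a - ξ i))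
          - (1 + ∑ i : Fin k, α i * Dfun ν (b - ξ i))
        = ∑ i : Fin k, (α i * Dfun ν (a - ξ i) - α i * Dfun ν (b - ξ i)) := by
      rw [Finset.sum_sub_distrib]; ring
    rw [e]
    calc |∑ i : Fin k, (α i * Dfun ν (a - ξ i) - α i * Dfun ν (b - ξ i))|
        ≤ ∑ i : Fin k, |α i * Dfun ν (a - ξ i) - α i * Dfun ν (b - ξ i)| :=
          Finset.abs_sum_le_sum_abs _ _
      _ ≤ ∑ i : Fin k, |α i| * (600 * |a - b|) := by
          apply Finset.sum_le_sum
          intro i _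
          rw [show α i * Dfun ν (a - ξ i) - α i * Dfun ν (b - ξ i)
              = α i * (Dfun ν (a - ξ i) - Dfun ν (b - ξ i)) from by ring, abs_mul]
          apply mul_le_mul_of_nonneg_left _ (abs_nonneg _)
          have h := Dfun_lip hν0 (a - ξ i) (b - ξ i)
          simpa [show a - ξ i - (b - ξ i) = a - b from by ring] using h
      _ = LG * |a - b| := by rw [← Finset.sum_mul, hLGdef]; ring
  have hmono : ∀ a b : ℝ, a ≤ b → (b - a) / 2 ≤ Gfun k ξ α ν b - Gfun k ξ α ν a := by
    have hder : ∀ x : ℝ, HasDerivAt (fun y => Gfun k ξ α ν y - y / 2) (G' x - 1/2) x :=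
      fun x => (hG' x).sub ((hasDerivAt_id x).div_const 2)
    have hmon : Monotone (fun y => Gfun k ξ α ν y - y / 2) := by
      apply monotone_of_deriv_nonneg
      · exact fun x => ((hder x).differentiableAt)
      · intro x
        rw [(hder x).deriv]
        linarith [hG'lo x]
    intro a b hab
    have h2 : Gfun k ξ α ν a - a / 2 ≤ Gfun k ξ α ν b - b / 2 := hmon hab
    linarith
  have hGinvLipO : ∀ x y : ℝ, Ginv x ≤ Ginv y → Ginv y - Ginv x ≤ 2 * |x - y| := by
    intro x y h
    have h2 := hmono _ _ h
    rw [hGinv2, hGinv2] at h2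
    have h3 : 0 ≤ y - x := by linarith
    have h4 : y - x ≤ |x - y| := by rw [abs_sub_comm, abs_of_nonneg h3]
    linarith
  have hGinvLip : ∀ x y : ℝ, |Ginv x - Ginv y| ≤ 2 * |x - y| := by
    intro x y
    rcases le_total (Ginv x) (Ginv y) with h | h
    · rw [abs_sub_comm, abs_of_nonneg (by linarith : (0:ℝ) ≤ Ginv y - Ginv x)]
      exact hGinvLipO x y h
    · rw [abs_of_nonneg (by linarith : (0:ℝ) ≤ Ginv x - Ginv y), abs_sub_comm]
      exact hGinvLipO y x h
  have hGid : ∀ t : ℝ, |Gfun k ξ α ν t - t| ≤ ν := by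
    intro t
    have e : Gfun k ξ α ν t - t
        = ∑ i : Fin k, α i * (t - ξ i) * |t - ξ i| * phi ((t - ξ i) / ν) := by
      unfold Gfun; ring
    rw [e]
    apply sum_single_bound _ _ hν0.le
    · intro i j hi hj
      apply sep_lemma hξ hν2 (x := t)
      · have hphi : phi ((t - ξ i)/ν) ≠ 0 := right_ne_zero_of_mul hi
        have h := phi_ne_zero hphi
        rw [abs_div, abs_of_pos hν0, div_lt_one hν0] at h
        exact h
      · have hphi : phi ((t - ξ j)/ν) ≠ 0 := right_ne_zero_of_mul hj
        have h := phi_ne_zero hphi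
        rw [abs_div, abs_of_pos hν0, div_lt_one hν0] at h
        exact h
    · intro i
      rcases le_or_gt |t - ξ i| ν with hle | hlt
      · rw [abs_mul, abs_mul, abs_mul, abs_abs, abs_of_nonneg (phi_nonneg _)]
        calc |α i| * |t - ξ i| * |t - ξ i| * phi ((t - ξ i)/ν)
            ≤ |α i| * ν * ν * 1 := by
              apply mul_le_mul _ (phi_le_one _) (phi_nonneg _)
                (mul_nonneg (mul_nonneg (abs_nonneg _) hν0.le) hν0.le)
              exact mul_le_mul (mul_le_mul_of_nonneg_left hle (abs_nonneg _)) hle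
                (abs_nonneg _) (mul_nonneg (abs_nonneg _) hν0.le)
          _ ≤ ν := by nlinarith [mul_le_mul_of_nonneg_left (hν1 i).le hν0.le,
              abs_nonneg (α i), hν0]
      · have hz : phi ((t - ξ i)/ν) = 0 := by
          apply phi_zero_of
          rw [abs_div, abs_of_pos hν0, lt_div_iff₀ hν0]
          linarith
        rw [hz, mul_zero, abs_zero]; exact hν0.le
  have hGinvB : ∀ x : ℝ, |Ginv x - x| ≤ ν := by
    intro x
    have h := hGid (Ginv x)
    rw [hGinv2] at h
    rw [abs_sub_comm] at h
    exact h
  obtain ⟨R, hRdef⟩ : ∃ R : ℝ, R = (∑ i : Fin k, |ξ i|) + ν := ⟨_, rfl⟩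
  have hR0 : 0 ≤ R := by rw [hRdef]; positivity
  have hRp : 0 ≤ R ^ ℓσ := Real.rpow_nonneg hR0 _
  obtain ⟨M, hMdef⟩ : ∃ M : ℝ, M = |σ 0| + c₃ * (2 + R ^ ℓσ) * R := ⟨_, rfl⟩
  have hM0 : 0 ≤ M := by
    have h1 := mul_nonneg (mul_nonneg hc₃.le (by linarith : (0:ℝ) ≤ 2 + R ^ ℓσ)) hR0
    have := abs_nonneg (σ 0)
    rw [hMdef]; linarith
  have hσM : ∀ a : ℝ, |a| ≤ R → |σ a| ≤ M := by
    intro a ha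
    have h := hA3 a 0
    rw [sub_zero] at h
    have h0 : |(0:ℝ)| ^ ℓσ ≤ 1 := by
      rw [abs_zero]; exact Real.rpow_le_one le_rfl zero_le_one hℓσ0
    have hrp : |a| ^ ℓσ ≤ R ^ ℓσ := Real.rpow_le_rpow (abs_nonneg a) ha hℓσ0
    have hb : |σ a - σ 0| ≤ c₃ * (2 + R ^ ℓσ) * R := by
      apply h.trans
      apply mul_le_mul _ ha (abs_nonneg a)
        (mul_nonneg hc₃.le (by linarith : (0:ℝ) ≤ 2 + R ^ ℓσ))
      apply mul_le_mul_of_nonneg_left _ hc₃.le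
      linarith
    have htr : |σ a| ≤ |σ a - σ 0| + |σ 0| := by
      calc |σ a| = |(σ a - σ 0) + σ 0| := by ring_nf
        _ ≤ |σ a - σ 0| + |σ 0| := abs_add_le _ _
    rw [hMdef]; linarith
  have hactive : ∀ a : ℝ, (∃ i : Fin k, Dfun ν (a - ξ i) ≠ 0) → |σ a| ≤ M := by
    rintro a ⟨i, hi⟩
    apply hσM
    have h1 : |a - ξ i| < ν := Dfun_ne_zero hν0 hi
    have h2 : |ξ i| ≤ ∑ j : Fin k, |ξ j| :=
      Finset.single_le_sum (fun j _ => abs_nonneg (ξ j)) (Finset.mem_univ i)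
    have h3 : |a| ≤ |a - ξ i| + |ξ i| := by
      calc |a| = |(a - ξ i) + ξ i| := by ring_nf
        _ ≤ |a - ξ i| + |ξ i| := abs_add_le _ _
    rw [hRdef]; linarith
  have h2p : (0:ℝ) < 2 ^ ℓσ := Real.rpow_pos_of_pos (by norm_num) _
  have hνp : (0:ℝ) ≤ ν ^ ℓσ := Real.rpow_nonneg hν0.le _
  obtain ⟨Kν, hKdef⟩ : ∃ K : ℝ, K = 1 + 2 ^ ℓσ + 2 * (2 ^ ℓσ * ν ^ ℓσ) := ⟨_, rfl⟩
  have hK0 : 0 < Kν := by rw [hKdef]; nlinarith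
  have hrbd : ∀ x : ℝ, |Ginv x| ^ ℓσ ≤ 2 ^ ℓσ * (|x| ^ ℓσ + ν ^ ℓσ) := by
    intro x
    have h1 : |Ginv x| ≤ |x| + ν := by
      have h := hGinvB x
      calc |Ginv x| = |(Ginv x - x) + x| := by ring_nf
        _ ≤ |Ginv x - x| + |x| := abs_add_le _ _
        _ ≤ |x| + ν := by linarith
    calc |Ginv x| ^ ℓσ ≤ (|x| + ν) ^ ℓσ :=
          Real.rpow_le_rpow (abs_nonneg _) h1 hℓσ0
      _ ≤ 2 ^ ℓσ * (|x| ^ ℓσ + ν ^ ℓσ) := rpow_add_le hℓσ0 (abs_nonneg x) hν0.le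
  have hKbound : ∀ x y : ℝ, 1 + |Ginv x| ^ ℓσ + |Ginv y| ^ ℓσ
      ≤ Kν * (1 + |x| ^ ℓσ + |y| ^ ℓσ) := by
    intro x y
    have hx := hrbd x
    have hy := hrbd y
    have hXx : 0 ≤ |x| ^ ℓσ := Real.rpow_nonneg (abs_nonneg x) _
    have hXy : 0 ≤ |y| ^ ℓσ := Real.rpow_nonneg (abs_nonneg y) _
    have hKge : (0:ℝ) ≤ Kν - 2 ^ ℓσ := by rw [hKdef]; nlinarith
    nlinarith [mul_nonneg hKge hXx, mul_nonneg hKge hXy]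
  refine ⟨3 * c₃ * Kν + 2 * (M * LG) + 1, by
    nlinarith [mul_pos (mul_pos (by norm_num : (0:ℝ) < 3) hc₃) hK0,
      mul_nonneg hM0 hLG0], ?_⟩
  intro x y
  have key1 : |σ (Ginv x) - σ (Ginv y)|
      ≤ c₃ * (1 + |Ginv x| ^ ℓσ + |Ginv y| ^ ℓσ) * |Ginv x - Ginv y| := hA3 _ _
  have key2 : |Ginv x - Ginv y| ≤ 2 * |x - y| := hGinvLip x y
  have key3 := hKbound x y
  have hXu : 0 ≤ |Ginv x| ^ ℓσ := Real.rpow_nonneg (abs_nonneg _) _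
  have hXv : 0 ≤ |Ginv y| ^ ℓσ := Real.rpow_nonneg (abs_nonneg _) _
  have hXx : 0 ≤ |x| ^ ℓσ := Real.rpow_nonneg (abs_nonneg x) _
  have hXy : 0 ≤ |y| ^ ℓσ := Real.rpow_nonneg (abs_nonneg y) _
  have hpos1 : 0 ≤ 1 + |Ginv x| ^ ℓσ + |Ginv y| ^ ℓσ := by linarith
  have hpos2 : 0 ≤ 1 + |x| ^ ℓσ + |y| ^ ℓσ := by linarith
  have hT : |G' (Ginv x) * σ (Ginv x) - G' (Ginv y) * σ (Ginv y)|
      ≤ (3/2) * (c₃ * (1 + |Ginv x| ^ ℓσ + |Ginv y| ^ ℓσ) * |Ginv x - Ginv y|)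
        + M * (LG * |Ginv x - Ginv y|) := by
    have hmain0 : 0 ≤ c₃ * (1 + |Ginv x| ^ ℓσ + |Ginv y| ^ ℓσ) * |Ginv x - Ginv y| :=
      mul_nonneg (mul_nonneg hc₃.le hpos1) (abs_nonneg _)
    by_cases hGG : G' (Ginv x) = G' (Ginv y)
    · have e : G' (Ginv x) * σ (Ginv x) - G' (Ginv y) * σ (Ginv y)
          = G' (Ginv x) * (σ (Ginv x) - σ (Ginv y)) := by rw [hGG]; ring
      rw [e, abs_mul]
      have h1 : |G' (Ginv x)| * |σ (Ginv x) - σ (Ginv y)|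
          ≤ (3/2) * (c₃ * (1 + |Ginv x| ^ ℓσ + |Ginv y| ^ ℓσ) * |Ginv x - Ginv y|) :=
        mul_le_mul (hG'hi _) key1 (abs_nonneg _) (by norm_num)
      have h2 : 0 ≤ M * (LG * |Ginv x - Ginv y|) :=
        mul_nonneg hM0 (mul_nonneg hLG0 (abs_nonneg _))
      linarith
    · have hex : (∃ i : Fin k, Dfun ν (Ginv x - ξ i) ≠ 0)
          ∨ (∃ i : Fin k, Dfun ν (Ginv y - ξ i) ≠ 0) := by
        by_contra hno
        push_neg at hno
        apply hGG
        rw [hG'eq (Ginv x), hG'eq (Ginv y),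
          Finset.sum_eq_zero (fun i _ => by rw [hno.1 i, mul_zero]),
          Finset.sum_eq_zero (fun i _ => by rw [hno.2 i, mul_zero])]
      have hGlip' : |G' (Ginv x) - G' (Ginv y)| ≤ LG * |Ginv x - Ginv y| := hG'lip _ _
      rcases hex with hex | hex
      · have hσu : |σ (Ginv x)| ≤ M := hactive _ hex
        have e : G' (Ginv x) * σ (Ginv x) - G' (Ginv y) * σ (Ginv y)
            = G' (Ginv y) * (σ (Ginv x) - σ (Ginv y))
              + (G' (Ginv x) - G' (Ginv y)) * σ (Ginv x) := by ring
        rw [e]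
        have h1 : |G' (Ginv y) * (σ (Ginv x) - σ (Ginv y))|
            ≤ (3/2) * (c₃ * (1 + |Ginv x| ^ ℓσ + |Ginv y| ^ ℓσ) * |Ginv x - Ginv y|) := by
          rw [abs_mul]
          exact mul_le_mul (hG'hi _) key1 (abs_nonneg _) (by norm_num)
        have h2 : |(G' (Ginv x) - G' (Ginv y)) * σ (Ginv x)| ≤ M * (LG * |Ginv x - Ginv y|) := by
          rw [abs_mul]
          calc |G' (Ginv x) - G' (Ginv y)| * |σ (Ginv x)|
              ≤ (LG * |Ginv x - Ginv y|) * M :=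
                mul_le_mul hGlip' hσu (abs_nonneg _) (mul_nonneg hLG0 (abs_nonneg _))
            _ = M * (LG * |Ginv x - Ginv y|) := by ring
        calc |G' (Ginv y) * (σ (Ginv x) - σ (Ginv y))
              + (G' (Ginv x) - G' (Ginv y)) * σ (Ginv x)|
            ≤ |G' (Ginv y) * (σ (Ginv x) - σ (Ginv y))|
              + |(G' (Ginv x) - G' (Ginv y)) * σ (Ginv x)| := abs_add_le _ _
          _ ≤ (3/2) * (c₃ * (1 + |Ginv x| ^ ℓσ + |Ginv y| ^ ℓσ) * |Ginv x - Ginv y|)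
              + M * (LG * |Ginv x - Ginv y|) := by linarith
      · have hσv : |σ (Ginv y)| ≤ M := hactive _ hex
        have e : G' (Ginv x) * σ (Ginv x) - G' (Ginv y) * σ (Ginv y)
            = G' (Ginv x) * (σ (Ginv x) - σ (Ginv y))
              + (G' (Ginv x) - G' (Ginv y)) * σ (Ginv y) := by ring
        rw [e]
        have h1 : |G' (Ginv x) * (σ (Ginv x) - σ (Ginv y))|
            ≤ (3/2) * (c₃ * (1 + |Ginv x| ^ ℓσ + |Ginv y| ^ ℓσ) * |Ginv x - Ginv y|) := by
          rw [abs_mul]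
          exact mul_le_mul (hG'hi _) key1 (abs_nonneg _) (by norm_num)
        have h2 : |(G' (Ginv x) - G' (Ginv y)) * σ (Ginv y)| ≤ M * (LG * |Ginv x - Ginv y|) := by
          rw [abs_mul]
          calc |G' (Ginv x) - G' (Ginv y)| * |σ (Ginv y)|
              ≤ (LG * |Ginv x - Ginv y|) * M :=
                mul_le_mul hGlip' hσv (abs_nonneg _) (mul_nonneg hLG0 (abs_nonneg _))
            _ = M * (LG * |Ginv x - Ginv y|) := by ring
        calc |G' (Ginv x) * (σ (Ginv x) - σ (Ginv y))
              + (G' (Ginv x) - G' (Ginv y)) * σ (Ginv y)|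
            ≤ |G' (Ginv x) * (σ (Ginv x) - σ (Ginv y))|
              + |(G' (Ginv x) - G' (Ginv y)) * σ (Ginv y)| := abs_add_le _ _
          _ ≤ (3/2) * (c₃ * (1 + |Ginv x| ^ ℓσ + |Ginv y| ^ ℓσ) * |Ginv x - Ginv y|)
              + M * (LG * |Ginv x - Ginv y|) := by linarith
  have hfin1 : c₃ * (1 + |Ginv x| ^ ℓσ + |Ginv y| ^ ℓσ) * |Ginv x - Ginv y|
      ≤ c₃ * (Kν * (1 + |x| ^ ℓσ + |y| ^ ℓσ)) * (2 * |x - y|) := by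
    apply mul_le_mul (mul_le_mul_of_nonneg_left key3 hc₃.le) key2 (abs_nonneg _)
      (mul_nonneg hc₃.le (mul_nonneg hK0.le hpos2))
  have hfin2 : LG * |Ginv x - Ginv y| ≤ LG * (2 * |x - y|) :=
    mul_le_mul_of_nonneg_left key2 hLG0
  have hfin2' : M * (LG * |Ginv x - Ginv y|) ≤ M * (LG * (2 * |x - y|)) :=
    mul_le_mul_of_nonneg_left hfin2 hM0
  have hfin1' : (3/2) * (c₃ * (1 + |Ginv x| ^ ℓσ + |Ginv y| ^ ℓσ) * |Ginv x - Ginv y|)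
      ≤ (3/2) * (c₃ * (Kν * (1 + |x| ^ ℓσ + |y| ^ ℓσ)) * (2 * |x - y|)) :=
    mul_le_mul_of_nonneg_left hfin1 (by norm_num)
  have hlast : (3/2) * (c₃ * (Kν * (1 + |x| ^ ℓσ + |y| ^ ℓσ)) * (2 * |x - y|))
        + M * (LG * (2 * |x - y|))
      ≤ (3 * c₃ * Kν + 2 * (M * LG) + 1) * (1 + |x| ^ ℓσ + |y| ^ ℓσ) * |x - y| := by
    nlinarith [mul_nonneg (mul_nonneg (mul_nonneg hM0 hLG0) (by linarith : (0:ℝ) ≤ |x| ^ ℓσ + |y| ^ ℓσ)) (abs_nonneg (x - y)),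
      mul_nonneg hpos2 (abs_nonneg (x - y))]
  linarith
end

section
/- Let ℓ_μ ∈ (0,∞) and assume μ : ℝ → ℝ satisfies condition (A2)(ii): there exist c ∈ (0,∞), k ∈ ℕ and points −∞ = ξ₀ < ξ₁ < … < ξ_k < ξ_{k+1} = ∞ such that for every i ∈ {1,…,k+1} and all x, y ∈ (ξ_{i−1}, ξ_i), |μ(x)−μ(y)| ≤ c·(1+|x|^{ℓ_μ}+|y|^{ℓ_μ})·|x−y|. Then there exists c' ∈ (0,∞) such that for all n ∈ ℕ with n ≥ 1 and all x ∈ ℝ, |μ_n(x) − μ(x)| ≤ (c'/√n)·(1 + |x|^{2ℓ_μ+1}). -/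
/-- The tamed coefficient `f_n(x) = f(x) / (1 + n^{-1/2} |x|^ℓ)`. -/
noncomputable def tame (f : ℝ → ℝ) (ℓ : ℝ) (n : ℕ) (x : ℝ) : ℝ :=
  f x / (1 + (1 / Real.sqrt (n : ℝ)) * |x| ^ ℓ)

lemma aux_rpow (t a b : ℝ) (ht : 0 ≤ t) (ha : 0 ≤ a) (hab : a ≤ b) :
    t ^ a ≤ 1 + t ^ b := by
  rcases le_or_gt t 1 with h | h
  · have h1 : t ^ a ≤ 1 := Real.rpow_le_one ht h ha
    have h2 : 0 ≤ t ^ b := Real.rpow_nonneg ht b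
    linarith
  · have h1 : t ^ a ≤ t ^ b := Real.rpow_le_rpow_of_exponent_le h.le hab
    linarith

lemma piece_nonempty (k : ℕ) (ξ : Fin k → ℝ) (hξ : StrictMono ξ) (i : Fin (k + 1)) :
    (piece k ξ i).Nonempty := by
  rcases Nat.eq_zero_or_pos k with hk | hk
  · subst hk; exact ⟨0, fun j _ => j.elim0, fun j _ => j.elim0⟩
  by_cases hi0 : (i : ℕ) = 0
  · refine ⟨ξ ⟨0, hk⟩ - 1, fun j hj => absurd hj (by omega), fun j _ => ?_⟩
    have h := hξ.monotone (show (⟨0, hk⟩ : Fin k) ≤ j from by simp [Fin.le_def])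
    linarith
  · by_cases hik : (i : ℕ) = k
    · refine ⟨ξ ⟨k - 1, by omega⟩ + 1, fun j hj => ?_, fun j hj => absurd hj (by omega)⟩
      have h := hξ.monotone (show j ≤ (⟨k - 1, by omega⟩ : Fin k) from by
        simp [Fin.le_def]; omega)
      linarith
    · have h1 : (i : ℕ) - 1 < k := by omega
      have h2 : (i : ℕ) < k := by omega
      have hlt : ξ ⟨(i : ℕ) - 1, h1⟩ < ξ ⟨(i : ℕ), h2⟩ := hξ (by rw [Fin.mk_lt_mk]; omega)
      refine ⟨(ξ ⟨(i : ℕ) - 1, h1⟩ + ξ ⟨(i : ℕ), h2⟩) / 2, fun j hj => ?_, fun j hj => ?_⟩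
      · have h := hξ.monotone (show j ≤ (⟨(i : ℕ) - 1, h1⟩ : Fin k) from by
          simp [Fin.le_def]; omega)
        linarith
      · have h := hξ.monotone (show (⟨(i : ℕ), h2⟩ : Fin k) ≤ j from by
          simp [Fin.le_def]; omega)
        linarith

lemma piece_cover (k : ℕ) (ξ : Fin k → ℝ) (hξ : StrictMono ξ) (x : ℝ)
    (hx : ∀ j : Fin k, x ≠ ξ j) : ∃ i : Fin (k + 1), x ∈ piece k ξ i := by
  by_cases hall : ∀ j : Fin k, ξ j < x
  · exact ⟨⟨k, by omega⟩, fun j _ => hall j,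
      fun j hj => absurd hj (by simp only [Fin.val_mk]; omega)⟩
  · push_neg at hall
    obtain ⟨j1, hj1⟩ := hall
    have hTne : (Finset.univ.filter (fun j : Fin k => x < ξ j)).Nonempty := by
      refine ⟨j1, ?_⟩
      simp only [Finset.mem_filter, Finset.mem_univ, true_and]
      exact lt_of_le_of_ne hj1 (hx j1)
    set T := Finset.univ.filter (fun j : Fin k => x < ξ j) with hT
    set j0 := T.min' hTne with hj0
    refine ⟨⟨(j0 : ℕ), by omega⟩, fun j hj => ?_, fun j hj => ?_⟩
    · have hjT : j ∉ T := by
        intro h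
        have := T.min'_le j h
        rw [← hj0] at this
        simp only [Fin.le_def] at this
        simp at hj
        omega
      simp only [hT, Finset.mem_filter, Finset.mem_univ, true_and, not_lt] at hjT
      exact lt_of_le_of_ne hjT (fun h => hx j h.symm)
    · have hx0 : x < ξ j0 := by
        have := T.min'_mem hTne
        simp only [hT, Finset.mem_filter, Finset.mem_univ, true_and] at this
        exact this
      refine hx0.trans_le (hξ.monotone ?_)
      simp only [Fin.le_def]
      simpa using hj

lemma tame_step (μ : ℝ → ℝ) (ℓ : ℝ) (n : ℕ) (hn : 1 ≤ n) (x : ℝ) :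
    |tame μ ℓ n x - μ x| ≤ |μ x| * |x| ^ ℓ / Real.sqrt (n : ℝ) := by
  set s := Real.sqrt (n : ℝ) with hs
  have hs1 : 1 ≤ s := by
    rw [hs, show (1:ℝ) = Real.sqrt 1 by simp]
    exact Real.sqrt_le_sqrt (by exact_mod_cast hn)
  have hs0 : 0 < s := lt_of_lt_of_le one_pos hs1
  set u := |x| ^ ℓ with hu
  have hu0 : 0 ≤ u := Real.rpow_nonneg (abs_nonneg x) ℓ
  have hd1 : (1:ℝ) ≤ 1 + 1 / s * u := by
    have : 0 ≤ 1 / s * u := by positivity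
    linarith
  have hd0 : (0:ℝ) < 1 + 1 / s * u := lt_of_lt_of_le one_pos hd1
  have e : tame μ ℓ n x - μ x = -(μ x * (1 / s * u)) / (1 + 1 / s * u) := by
    rw [tame]
    field_simp
    ring
  rw [e, abs_div, abs_neg, abs_of_pos hd0, abs_mul,
    abs_of_nonneg (by positivity : (0:ℝ) ≤ 1 / s * u)]
  calc |μ x| * (1 / s * u) / (1 + 1 / s * u) ≤ |μ x| * (1 / s * u) / 1 :=
        div_le_div_of_nonneg_left (by positivity) one_pos hd1
      _ = |μ x| * u / s := by field_simp

/-- If `μ` satisfies (A2)(ii) with `ℓμ ∈ (0,∞)`, then there is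
`c' ∈ (0,∞)` such that for all `n ≥ 1` and all `x`,
`|μ_n(x) - μ(x)| ≤ (c'/√n)·(1 + |x|^{2ℓμ+1})`. -/
theorem stmt_17 (ℓμ : ℝ) (hℓμ : 0 < ℓμ)
    (μ : ℝ → ℝ)
    (c : ℝ) (hc : 0 < c) (k : ℕ) (ξ : Fin k → ℝ) (hξ : StrictMono ξ)
    (hA2ii : ∀ i : Fin (k + 1), ∀ x ∈ piece k ξ i, ∀ y ∈ piece k ξ i,
      |μ x - μ y| ≤ c * (1 + |x| ^ ℓμ + |y| ^ ℓμ) * |x - y|) :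
    ∃ c' : ℝ, 0 < c' ∧ ∀ n : ℕ, 1 ≤ n → ∀ x : ℝ,
      |tame μ ℓμ n x - μ x| ≤ c' / Real.sqrt (n : ℝ) * (1 + |x| ^ (2 * ℓμ + 1)) := by
  choose p hp using piece_nonempty k ξ hξ
  obtain ⟨M1, hM1⟩ := Finite.exists_le (fun i : Fin (k + 1) => |μ (p i)|)
  obtain ⟨M2, hM2⟩ := Finite.exists_le (fun i : Fin (k + 1) => |p i|)
  obtain ⟨M3, hM3⟩ := Finite.exists_le (fun j : Fin k => |μ (ξ j)| * |ξ j| ^ ℓμ)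
  set M : ℝ := max 0 (max M1 (max M2 M3)) with hMdef
  have hM0 : 0 ≤ M := le_max_left _ _
  have hMa : ∀ i, |μ (p i)| ≤ M := fun i => (hM1 i).trans (by
    simp only [hMdef]; exact le_max_of_le_right (le_max_left _ _))
  have hMb : ∀ i, |p i| ≤ M := fun i => (hM2 i).trans (by
    simp only [hMdef]
    exact le_max_of_le_right (le_max_of_le_right (le_max_left _ _)))
  have hMc : ∀ j : Fin k, |μ (ξ j)| * |ξ j| ^ ℓμ ≤ M := fun j => (hM3 j).trans (by
    simp only [hMdef]
    exact le_max_of_le_right (le_max_of_le_right (le_max_right _ _)))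
  set Q : ℝ := M ^ ℓμ with hQdef
  have hQ0 : 0 ≤ Q := Real.rpow_nonneg hM0 ℓμ
  set A : ℝ := M + M + c * (2 + 2 * M + Q + Q * M) with hAdef
  have hA0 : 0 ≤ A := by
    have : 0 ≤ c * (2 + 2 * M + Q + Q * M) := by positivity
    linarith
  -- the growth bound
  have key : ∀ x : ℝ, |μ x| * |x| ^ ℓμ ≤ A * (1 + |x| ^ (2 * ℓμ + 1)) := by
    intro x
    set t : ℝ := |x| with htdef
    have ht0 : 0 ≤ t := abs_nonneg x
    set u : ℝ := t ^ ℓμ with hudef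
    set v : ℝ := t ^ (2 * ℓμ + 1) with hvdef
    have hu0 : 0 ≤ u := Real.rpow_nonneg ht0 ℓμ
    have hv0 : 0 ≤ v := Real.rpow_nonneg ht0 _
    have h1 : u ≤ 1 + v := aux_rpow t ℓμ (2 * ℓμ + 1) ht0 hℓμ.le (by linarith)
    have hut : u * t = t ^ (ℓμ + 1) := by
      rw [Real.rpow_add' ht0 (by positivity), Real.rpow_one]
    have h2 : u * t ≤ 1 + v := by
      rw [hut]; exact aux_rpow t (ℓμ + 1) (2 * ℓμ + 1) ht0 (by linarith) (by linarith)
    have huu : u * u = t ^ (ℓμ + ℓμ) := by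
      rw [Real.rpow_add' ht0 (by positivity)]
    have h3 : u * u ≤ 1 + v := by
      rw [huu]; exact aux_rpow t (ℓμ + ℓμ) (2 * ℓμ + 1) ht0 (by linarith) (by linarith)
    have h4 : u * u * t ≤ 1 + v := by
      have : u * u * t = t ^ (ℓμ + ℓμ + 1) := by
        rw [huu, show t ^ (ℓμ + ℓμ + 1) = t ^ (ℓμ + ℓμ) * t ^ (1:ℝ) from
          Real.rpow_add' ht0 (by positivity), Real.rpow_one]
      rw [this]
      exact aux_rpow t (ℓμ + ℓμ + 1) (2 * ℓμ + 1) ht0 (by linarith) (by linarith)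
    by_cases hxξ : ∃ j : Fin k, x = ξ j
    · obtain ⟨j, rfl⟩ := hxξ
      have := hMc j
      have hM' : M * 1 ≤ M * (1 + v) := by nlinarith
      calc |μ (ξ j)| * t ^ ℓμ = |μ (ξ j)| * |ξ j| ^ ℓμ := rfl
        _ ≤ M := hMc j
        _ = M * 1 := by ring
        _ ≤ M * (1 + v) := hM'
        _ ≤ A * (1 + v) := by
            have hAM : M ≤ A := by
              have : 0 ≤ c * (2 + 2 * M + Q + Q * M) := by positivity
              rw [hAdef]; linarith
            exact mul_le_mul_of_nonneg_right hAM (by linarith)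
    · push_neg at hxξ
      obtain ⟨i, hxi⟩ := piece_cover k ξ hξ x hxξ
      have hlip := hA2ii i x hxi (p i) (hp i)
      have hPQ : |p i| ^ ℓμ ≤ Q := Real.rpow_le_rpow (abs_nonneg _) (hMb i) hℓμ.le
      have hxp : |x - p i| ≤ t + M := by
        calc |x - p i| ≤ |x| + |p i| := abs_sub _ _
          _ ≤ t + M := by have := hMb i; rw [htdef]; linarith
      have hbound : |μ x| ≤ M + c * (1 + u + Q) * (t + M) := by
        have habs : |μ x| ≤ |μ (p i)| + |μ x - μ (p i)| := by
          have := abs_sub_abs_le_abs_sub (μ x) (μ (p i))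
          linarith [abs_sub_abs_le_abs_sub (μ x) (μ (p i))]
        have hprod : c * (1 + |x| ^ ℓμ + |p i| ^ ℓμ) * |x - p i|
            ≤ c * (1 + u + Q) * (t + M) := by
          apply mul_le_mul
          · apply mul_le_mul_of_nonneg_left _ hc.le
            rw [← htdef, ← hudef]
            linarith
          · exact hxp
          · exact abs_nonneg _
          · positivity
        have := hMa i
        linarith
      have hmul : |μ x| * u ≤ (M + c * (1 + u + Q) * (t + M)) * u :=
        mul_le_mul_of_nonneg_right hbound hu0
      have e : (M + c * (1 + u + Q) * (t + M)) * u
          = M * u + c * (u * t) + c * M * u + c * (u * u * t) + c * M * (u * u)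
            + c * Q * (u * t) + c * Q * M * u := by ring
      have b1 : M * u ≤ M * (1 + v) := mul_le_mul_of_nonneg_left h1 hM0
      have b2 : c * (u * t) ≤ c * (1 + v) := mul_le_mul_of_nonneg_left h2 hc.le
      have b3 : c * M * u ≤ c * M * (1 + v) :=
        mul_le_mul_of_nonneg_left h1 (by positivity)
      have b4 : c * (u * u * t) ≤ c * (1 + v) := mul_le_mul_of_nonneg_left h4 hc.le
      have b5 : c * M * (u * u) ≤ c * M * (1 + v) :=
        mul_le_mul_of_nonneg_left h3 (by positivity)
      have b6 : c * Q * (u * t) ≤ c * Q * (1 + v) :=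
        mul_le_mul_of_nonneg_left h2 (by positivity)
      have b7 : c * Q * M * u ≤ c * Q * M * (1 + v) :=
        mul_le_mul_of_nonneg_left h1 (by positivity)
      have hsum : M * (1 + v) + c * (1 + v) + c * M * (1 + v) + c * (1 + v)
          + c * M * (1 + v) + c * Q * (1 + v) + c * Q * M * (1 + v) ≤ A * (1 + v) := by
        have hAle : M + c * (2 + 2 * M + Q + Q * M) ≤ A := by
          rw [hAdef]; linarith
        have h1v : (0:ℝ) ≤ 1 + v := by linarith
        calc M * (1 + v) + c * (1 + v) + c * M * (1 + v) + c * (1 + v)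
              + c * M * (1 + v) + c * Q * (1 + v) + c * Q * M * (1 + v)
            = (M + c * (2 + 2 * M + Q + Q * M)) * (1 + v) := by ring
          _ ≤ A * (1 + v) := mul_le_mul_of_nonneg_right hAle h1v
      calc |μ x| * u ≤ (M + c * (1 + u + Q) * (t + M)) * u := hmul
        _ = M * u + c * (u * t) + c * M * u + c * (u * u * t) + c * M * (u * u)
            + c * Q * (u * t) + c * Q * M * u := e
        _ ≤ A * (1 + v) := by linarith
  -- conclude
  refine ⟨A + 1, by linarith, fun n hn x => ?_⟩
  have hstep := tame_step μ ℓμ n hn x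
  set s := Real.sqrt (n : ℝ) with hs
  have hs1 : 1 ≤ s := by
    rw [hs, show (1:ℝ) = Real.sqrt 1 by simp]
    exact Real.sqrt_le_sqrt (by exact_mod_cast hn)
  have hs0 : 0 < s := lt_of_lt_of_le one_pos hs1
  have hv0 : 0 ≤ |x| ^ (2 * ℓμ + 1) := Real.rpow_nonneg (abs_nonneg x) _
  have hkey := key x
  calc |tame μ ℓμ n x - μ x| ≤ |μ x| * |x| ^ ℓμ / s := hstep
    _ ≤ A * (1 + |x| ^ (2 * ℓμ + 1)) / s := by
        gcongr
    _ ≤ (A + 1) / s * (1 + |x| ^ (2 * ℓμ + 1)) := by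
        rw [div_mul_eq_mul_div]
        gcongr
        linarith
end
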